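/- For every affine root a ∈ R, the Demazure–Lusztig element Ť(a) satisfies the quadratic relation (Ť(a) − τ_a)(Ť(a) + τ_a^{−1}) = 0 in 𝒜 # W; in particular (Ť_j − τ_j)(Ť_j + τ_j^{−1}) = 0 for j = 0,…,n. -/

import Mathlib

open scoped BigOperators
open RealInnerProductSpace

noncomputable section

/-- The alternating word `x y x y ⋯` with `m` factors. -/
def braidWord {M : Type} [Monoid M] (x y : M) (m : ℕ) : M :=
  ((List.range m).map (fun i => if i % 2 = 0 then x else y)).prod

/-- The data of:  an irreducible reduced crystallographic root system `R₀` of full rank,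
realized inside its weight lattice `P` which is embedded in a Euclidean space `V`;
the ring `𝕃` of coefficients together with the Weyl-invariant Hecke parameters `τ`;
the extended affine Weyl group `W = W₀ ⋉ t(c P̂)` of the corresponding irreducible reduced
affine root system `R` (affine roots are recorded as pairs `(α, r) ∈ P × ℤ` standing for
`α + m_α r c`), with its simple reflections `s₀, …, s_n`, length function, and the
subgroup `Ω` of length-zero elements; the localization `𝒜` of the group algebra `𝕃[P]`
at the Weyl denominator `δ`; and the smash product `𝒜 # W`. -/
structure DAHACtx where
  n : ℕ
  hn : 0 < n
  c : ℝ
  hc : 0 < c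
  /- the coefficient algebra 𝕃 -/
  L : Type
  [ringL : CommRing L]
  [algCL : Algebra ℂ L]
  [ntL : Nontrivial L]
  /- the ambient Euclidean space V -/
  V : Type
  [nacgV : NormedAddCommGroup V]
  [ipsV : InnerProductSpace ℝ V]
  [fdV : FiniteDimensional ℝ V]
  finrankV : Module.finrank ℝ V = n
  /- the weight lattice P, embedded in V -/
  P : Type
  [acgP : AddCommGroup P]
  [decP : DecidableEq P]
  ePV : P →+ V
  ePV_inj : Function.Injective ePV
  /- the finite root system R₀ (its elements lie in the root lattice Q ⊆ P) -/
  R₀ : Finset P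
  root_ne : ∀ α ∈ R₀, α ≠ (0 : P)
  root_neg : ∀ α ∈ R₀, -α ∈ R₀
  root_span : Submodule.span ℝ (ePV '' R₀) = ⊤
  root_reduced : ∀ α ∈ R₀, ∀ β ∈ R₀, ∀ t : ℝ, ePV β = t • ePV α → t = 1 ∨ t = -1
  /- the coroot pairing ⟨λ, α^∨⟩ (crystallographic integrality) -/
  cp : P → P →+ ℤ
  cp_self : ∀ α ∈ R₀, cp α α = 2
  cp_inner : ∀ α ∈ R₀, ∀ lam : P, ((cp α lam : ℝ)) * ⟪ePV α, ePV α⟫ = 2 * ⟪ePV lam, ePV α⟫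
  root_refl : ∀ α ∈ R₀, ∀ β ∈ R₀, β - cp α β • α ∈ R₀
  irreducible : ∀ S : Finset P, S ⊆ R₀ → S.Nonempty → (R₀ \ S).Nonempty →
      ∃ α ∈ S, ∃ β ∈ R₀ \ S, cp α β ≠ 0
  weight_lattice : ∀ v : V,
      (∀ α ∈ R₀, ∃ z : ℤ, (z : ℝ) * ⟪ePV α, ePV α⟫ = 2 * ⟪v, ePV α⟫) → v ∈ Set.range ePV
  /- the simple roots:  αP j, for j = 1, …, n, is the simple basis of R₀⁺, while
     αP 0 = α₀ is the gradient of the affine simple root a₀ = α₀ + c -/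
  αP : Fin (n+1) → P
  αP_mem : ∀ j, αP j ∈ R₀
  simple_indep : LinearIndependent ℝ (fun j : Fin n => ePV (αP j.succ))
  simple_pos : ∀ β ∈ R₀,
      (∃ g : Fin n → ℕ, β = ∑ j : Fin n, (g j : ℤ) • αP j.succ) ∨
      (∃ g : Fin n → ℕ, β = -(∑ j : Fin n, (g j : ℤ) • αP j.succ))
  /- the Hecke parameters τ_α  (recorded as a function of the gradient root) -/
  τR : P → Lˣ
  /- the extended affine Weyl group W, together with:
     the simple reflections s j (j = 0, …, n);  the gradient action w ↦ w' on P;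
     the reflections s_a attached to the affine roots a = (α, r);  the action of W on
     affine roots;  the gradient projection w = v t_{cλ} ↦ v and the translations t_{cμ} -/
  W : Type
  [grpW : Group W]
  s : Fin (n+1) → W
  grAct : W →* Multiplicative (AddAut P)
  saff : P × ℤ → W
  saff_simple : ∀ j : Fin (n+1), saff (αP j, if j = 0 then 1 else 0) = s j
  saff_sq : ∀ a : P × ℤ, saff a * saff a = 1
  grAct_saff : ∀ (a : P × ℤ) (lam : P), Multiplicative.toAdd (grAct (saff a)) lam = lam - cp a.1 lam • a.1
  root_stable : ∀ (w : W), ∀ α ∈ R₀, Multiplicative.toAdd (grAct w) α ∈ R₀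
  τ_inv : ∀ (w : W) (α : P), τR (Multiplicative.toAdd (grAct w) α) = τR α
  wact : W → P × ℤ → P × ℤ
  wact_one : ∀ a, wact 1 a = a
  wact_mul : ∀ v w a, wact (v * w) a = wact v (wact w a)
  wact_fst : ∀ w a, (wact w a).1 = Multiplicative.toAdd (grAct w) a.1
  saff_conj : ∀ w a, saff (wact w a) = w * saff a * w⁻¹
  prW : W →* W
  prW_saff : ∀ a : P × ℤ, prW (saff a) = saff (a.1, 0)
  grAct_prW : ∀ w, grAct (prW w) = grAct w
  Phat : Type
  [acgPhat : AddCommGroup Phat]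
  tr : Phat → W
  tr_add : ∀ μ ν, tr (μ + ν) = tr μ * tr ν
  tr_inj : Function.Injective tr
  grAct_tr : ∀ (μ : Phat) (lam : P), Multiplicative.toAdd (grAct (tr μ)) lam = lam
  prW_tr : ∀ μ, prW (tr μ) = 1
  W_decomp : ∀ w : W, ∃! μ : Phat, w = prW w * tr μ
  /- the length function on W and the subgroup Ω of length-zero elements -/
  len : W → ℕ
  len_s : ∀ j, len (s j) = 1
  Ω : Subgroup W
  Ω_len : ∀ w : W, w ∈ Ω ↔ len w = 0
  Ω_comm : ∀ u v : Ω, u * v = v * u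
  exists_reduced : ∀ w : W, ∃ (u : Ω) (l : List (Fin (n+1))),
      w = (u : W) * (l.map s).prod ∧ l.length = len w
  len_min : ∀ (w : W) (u : Ω) (l : List (Fin (n+1))),
      w = (u : W) * (l.map s).prod → len w ≤ l.length
  σΩ : Ω →* Equiv.Perm (Fin (n+1))
  Ω_conj : ∀ (u : Ω) (j : Fin (n+1)), (u : W) * s j * (u : W)⁻¹ = s (σΩ u j)
  Ω_aff : ∀ (u : Ω) (j : Fin (n+1)),
      wact (u : W) (αP j, if j = 0 then 1 else 0) = (αP (σΩ u j), if σΩ u j = 0 then 1 else 0)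
  /- the elements (X^λ - X^{s_j'λ})/(1 - X^{-α_j}) of 𝕃[P] -/
  DL : Fin (n+1) → P → AddMonoidAlgebra L P
  DL_spec : ∀ (j : Fin (n+1)) (lam : P),
      (1 - AddMonoidAlgebra.of' L P (-(αP j))) * DL j lam
        = AddMonoidAlgebra.of' L P lam - AddMonoidAlgebra.of' L P (Multiplicative.toAdd (grAct (s j)) lam)
  /- 𝒜 : the localization of 𝕃[P] at the Weyl denominator δ = ∏_{α ∈ R₀} (1 - X^α) -/
  A : Type
  [cringA : CommRing A]
  [algLA : Algebra L A]
  toA : AddMonoidAlgebra L P →ₐ[L] A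
  uδ : Aˣ
  uδ_spec : (uδ : A) = toA (∏ α ∈ R₀, (1 - AddMonoidAlgebra.of' L P α))
  A_surj : ∀ x : A, ∃ (f : AddMonoidAlgebra L P) (k : ℕ), x = toA f * (((uδ⁻¹ : Aˣ) : A)) ^ k
  A_ker : ∀ f : AddMonoidAlgebra L P, toA f = 0 →
      ∃ k : ℕ, (∏ α ∈ R₀, (1 - AddMonoidAlgebra.of' L P α)) ^ k * f = 0
  uXR : P → Aˣ
  uXR_spec : ∀ α ∈ R₀, (uXR α : A) = 1 - toA (AddMonoidAlgebra.of' L P (-α))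
  /- the action of W on 𝒜 (through the gradient w ↦ w') -/
  actA : W →* (A ≃ₐ[L] A)
  actA_X : ∀ (w : W) (lam : P),
      actA w (toA (AddMonoidAlgebra.of' L P lam)) = toA (AddMonoidAlgebra.of' L P (Multiplicative.toAdd (grAct w) lam))
  /- the smash product 𝒜 # W -/
  SW : Type
  [ringSW : Ring SW]
  [algLSW : Algebra L SW]
  ιA : A →ₐ[L] SW
  ιW : W →* SWˣ
  cross : ∀ (w : W) (f : A), ((ιW w : SWˣ) : SW) * ιA f = ιA (actA w f) * ((ιW w : SWˣ) : SW)
  decomp : Function.Bijective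
      (fun x : W →₀ A => x.sum fun w f => ιA f * ((ιW w : SWˣ) : SW))

attribute [instance] DAHACtx.ringL DAHACtx.algCL DAHACtx.ntL DAHACtx.nacgV DAHACtx.ipsV
  DAHACtx.fdV DAHACtx.acgP DAHACtx.decP DAHACtx.grpW DAHACtx.acgPhat DAHACtx.cringA
  DAHACtx.algLA DAHACtx.ringSW DAHACtx.algLSW

namespace DAHACtx

variable (C : DAHACtx)

/-- The Hecke parameter `τ_j = τ_{a_j}`. -/
def τ (j : Fin (C.n + 1)) : C.Lˣ := C.τR (C.αP j)

/-- `m_{jk}`, the order of `s_j s_k` in `W` (with the value `0` standing for `m_{jk} = ∞`). -/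
def m (j k : Fin (C.n + 1)) : ℕ := orderOf (C.s j * C.s k)

/-- The monomial `X^λ` in the group algebra `𝕃[P]`. -/
def Xl (lam : C.P) : AddMonoidAlgebra C.L C.P := AddMonoidAlgebra.of' C.L C.P lam

/-- The monomial `X^λ`, viewed inside the smash product `𝒜 # W`. -/
def XS (lam : C.P) : C.SW := C.ιA (C.toA (C.Xl lam))

/-- The simple affine roots `a_0 = α₀ + c` and `a_j = α_j` (`1 ≤ j ≤ n`). -/
def asimple (j : Fin (C.n + 1)) : C.P × ℤ := (C.αP j, if j = 0 then 1 else 0)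

/-- The Demazure–Lusztig element
`Ť(a) = τ_a s_a + (τ_a - τ_a⁻¹)(1 - X^{-a'})⁻¹ (1 - s_a)` of `𝒜 # W`. -/
def Tc (a : C.P × ℤ) : C.SW :=
  ((C.τR a.1 : C.L)) • ((C.ιW (C.saff a) : C.SWˣ) : C.SW)
    + C.ιA ((((C.τR a.1 : C.L)) - (((C.τR a.1)⁻¹ : C.Lˣ) : C.L)) • (((C.uXR a.1)⁻¹ : C.Aˣ) : C.A))
        * (1 - ((C.ιW (C.saff a) : C.SWˣ) : C.SW))

/-- The Demazure–Lusztig element `Ť_j = Ť(a_j)`. -/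
def Tch (j : Fin (C.n + 1)) : C.SW := C.Tc (C.asimple j)

/-- `w = u s_{j₁} ⋯ s_{j_ℓ}` is a reduced decomposition of `w` (`u ∈ Ω`, `ℓ = ℓ(w)`). -/
def IsReducedWord (w : C.W) (u : C.Ω) (l : List (Fin (C.n + 1))) : Prop :=
  w = (u : C.W) * (l.map C.s).prod ∧ l.length = C.len w

/-- A choice of the `Ω`-part of a reduced decomposition of `w`. -/
def redΩ (w : C.W) : C.Ω := (C.exists_reduced w).choose

/-- A choice of reduced word for `w`. -/
def redList (w : C.W) : List (Fin (C.n + 1)) := (C.exists_reduced w).choose_spec.choose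

theorem red_spec (w : C.W) : C.IsReducedWord w (C.redΩ w) (C.redList w) :=
  (C.exists_reduced w).choose_spec.choose_spec

/-- The element `Ť_w = u Ť_{j₁} ⋯ Ť_{j_ℓ}` of `𝒜 # W`, for a (choice of) reduced
decomposition `w = u s_{j₁} ⋯ s_{j_ℓ}`. -/
def TwS (w : C.W) : C.SW :=
  ((C.ιW (C.redΩ w) : C.SWˣ) : C.SW) * ((C.redList w).map fun j => C.Tch j).prod

/-- The Bruhat partial order on `W`:  `v ≤ w` iff a reduced expression for `v` is obtained
from a reduced expression for `w` by deleting simple reflections. -/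
def BruhatLE (v w : C.W) : Prop :=
  ∃ (u : C.Ω) (lw lv : List (Fin (C.n + 1))),
    C.IsReducedWord w u lw ∧ C.IsReducedWord v u lv ∧ lv.Sublist lw

end DAHACtx

/-- For every affine root `a ∈ R`, the Demazure–Lusztig element `Ť(a)` satisfies the
quadratic relation `(Ť(a) - τ_a)(Ť(a) + τ_a⁻¹) = 0` in `𝒜 # W`;  in particular
`(Ť_j - τ_j)(Ť_j + τ_j⁻¹) = 0` for `j = 0, …, n`. -/
theorem DL_quadratic_relation (C : DAHACtx) :
    (∀ a : C.P × ℤ, a.1 ∈ C.R₀ →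
      (C.Tc a - algebraMap C.L C.SW ((C.τR a.1 : C.L)))
        * (C.Tc a + algebraMap C.L C.SW (((C.τR a.1)⁻¹ : C.Lˣ) : C.L)) = 0) ∧
    (∀ j : Fin (C.n + 1),
      (C.Tch j - algebraMap C.L C.SW ((C.τ j : C.L)))
        * (C.Tch j + algebraMap C.L C.SW (((C.τ j)⁻¹ : C.Lˣ) : C.L)) = 0) := by
  have main : ∀ a : C.P × ℤ, a.1 ∈ C.R₀ →
      (C.Tc a - algebraMap C.L C.SW ((C.τR a.1 : C.L)))
        * (C.Tc a + algebraMap C.L C.SW (((C.τR a.1)⁻¹ : C.Lˣ) : C.L)) = 0 := by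
    intro a ha
    set σ := C.actA (C.saff a) with hσdef
    set S : C.SW := ((C.ιW (C.saff a) : C.SWˣ) : C.SW) with hSdef
    set τ : C.Lˣ := C.τR a.1 with hτdef
    set t : C.L := (τ : C.L) - ((τ⁻¹ : C.Lˣ) : C.L) with htdef
    set w : C.A := (((C.uXR a.1)⁻¹ : C.Aˣ) : C.A) with hwdef
    set b : C.A := t • w with hbdef
    -- S squared is 1
    have hS2 : S * S = 1 := by
      rw [hSdef, ← Units.val_mul, ← map_mul, C.saff_sq a, map_one, Units.val_one]
    -- the gradient action of s_a on -α
    have hgr : Multiplicative.toAdd (C.grAct (C.saff a)) (-a.1) = a.1 := by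
      rw [C.grAct_saff, map_neg, C.cp_self a.1 ha]; abel
    -- u = 1 - X^{-α} and its image v = σ u = 1 - X^{α}
    have hu : ((C.uXR a.1 : C.A)) = 1 - C.toA (AddMonoidAlgebra.of' C.L C.P (-a.1)) :=
      C.uXR_spec a.1 ha
    have hv : σ ((C.uXR a.1 : C.A)) = 1 - C.toA (AddMonoidAlgebra.of' C.L C.P a.1) := by
      rw [hu, map_sub, map_one, hσdef, C.actA_X, hgr]
    have hXX : C.toA (AddMonoidAlgebra.of' C.L C.P (-a.1))
        * C.toA (AddMonoidAlgebra.of' C.L C.P a.1) = 1 := by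
      rw [← map_mul, AddMonoidAlgebra.of'_apply, AddMonoidAlgebra.of'_apply,
        AddMonoidAlgebra.single_mul_single, neg_add_cancel, one_mul,
        ← AddMonoidAlgebra.one_def, map_one]
    have huv : ((C.uXR a.1 : C.A)) * σ ((C.uXR a.1 : C.A))
        = ((C.uXR a.1 : C.A)) + σ ((C.uXR a.1 : C.A)) := by
      rw [hv, hu]; linear_combination hXX
    have hw : w * ((C.uXR a.1 : C.A)) = 1 := by
      rw [hwdef]; exact Units.inv_mul _
    have hvinv : σ w * σ ((C.uXR a.1 : C.A)) = 1 := by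
      rw [← map_mul, hw, map_one]
    have h1 : (1 - w) * σ ((C.uXR a.1 : C.A)) = 1 := by
      linear_combination w * huv + (1 - σ ((C.uXR a.1 : C.A))) * hw
    have hσinv : σ w = 1 - w := by
      calc σ w = σ w * ((1 - w) * σ ((C.uXR a.1 : C.A))) := by rw [h1, mul_one]
        _ = (σ w * σ ((C.uXR a.1 : C.A))) * (1 - w) := by ring
        _ = 1 - w := by rw [hvinv, one_mul]
    -- the key identity  σ b = t - b
    have hσb : σ b = algebraMap C.L C.A t - b := by
      rw [hbdef, map_smul, hσinv, smul_sub, Algebra.algebraMap_eq_smul_one]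
    -- cross relations
    have hcross : ∀ f : C.A, S * C.ιA f = C.ιA (σ f) * S := fun f => C.cross (C.saff a) f
    have hmul : ∀ f g f' g' : C.A,
        (C.ιA f + C.ιA g * S) * (C.ιA f' + C.ιA g' * S)
          = C.ιA (f * f' + g * σ g') + C.ιA (f * g' + g * σ f') * S := by
      intro f g f' g'
      have e1 : C.ιA g * S * C.ιA f' = C.ιA (g * σ f') * S := by
        rw [mul_assoc, hcross, ← mul_assoc, ← map_mul]
      have e2 : C.ιA g * S * (C.ιA g' * S) = C.ιA (g * σ g') := by
        rw [mul_assoc, ← mul_assoc S, hcross, mul_assoc, hS2, mul_one, ← map_mul]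
      calc (C.ιA f + C.ιA g * S) * (C.ιA f' + C.ιA g' * S)
          = C.ιA f * C.ιA f' + C.ιA f * C.ιA g' * S
              + (C.ιA g * S * C.ιA f' + C.ιA g * S * (C.ιA g' * S)) := by noncomm_ring
        _ = C.ιA (f * f') + C.ιA (f * g') * S
              + (C.ιA (g * σ f') * S + C.ιA (g * σ g')) := by
            rw [e1, e2, ← map_mul, ← map_mul]
        _ = _ := by rw [map_add, map_add]; noncomm_ring
    -- Tc in the form  b + g * S
    have hTc : C.Tc a = C.ιA b + C.ιA (algebraMap C.L C.A (τ : C.L) - b) * S := by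
      show (τ : C.L) • S + C.ιA b * (1 - S) = _
      rw [map_sub, (C.ιA).commutes, Algebra.smul_def]
      noncomm_ring
    -- the image of g under σ
    have hσg : σ (algebraMap C.L C.A (τ : C.L) - b)
        = algebraMap C.L C.A ((τ⁻¹ : C.Lˣ) : C.L) + b := by
      rw [map_sub, AlgEquiv.commutes, hσb, htdef, map_sub]; ring
    have hττA : algebraMap C.L C.A (τ : C.L) * algebraMap C.L C.A ((τ⁻¹ : C.Lˣ) : C.L) = 1 := by
      rw [← map_mul, ← Units.val_mul, mul_inv_cancel, Units.val_one, map_one]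
    -- the square of Tc
    have hsq : C.Tc a * C.Tc a = algebraMap C.L C.SW t * C.Tc a + 1 := by
      rw [hTc, hmul, hσg, hσb]
      have hA1 : b * b + (algebraMap C.L C.A (τ : C.L) - b)
            * (algebraMap C.L C.A ((τ⁻¹ : C.Lˣ) : C.L) + b)
          = algebraMap C.L C.A t * b + 1 := by
        rw [htdef, map_sub]; linear_combination hττA
      have hA2 : b * (algebraMap C.L C.A (τ : C.L) - b)
            + (algebraMap C.L C.A (τ : C.L) - b) * (algebraMap C.L C.A t - b)
          = algebraMap C.L C.A t * (algebraMap C.L C.A (τ : C.L) - b) := by ring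
      rw [hA1, hA2, ← (C.ιA).commutes t, map_add, map_one, map_mul, map_mul]
      noncomm_ring
    -- conclude
    have hcom : ∀ r : C.L, algebraMap C.L C.SW r * C.Tc a = C.Tc a * algebraMap C.L C.SW r :=
      fun r => Algebra.commutes r _
    have hττS : algebraMap C.L C.SW (τ : C.L) * algebraMap C.L C.SW ((τ⁻¹ : C.Lˣ) : C.L)
        = 1 := by
      rw [← map_mul, ← Units.val_mul, mul_inv_cancel, Units.val_one, map_one]
    calc (C.Tc a - algebraMap C.L C.SW (τ : C.L))
          * (C.Tc a + algebraMap C.L C.SW ((τ⁻¹ : C.Lˣ) : C.L))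
        = C.Tc a * C.Tc a + C.Tc a * algebraMap C.L C.SW ((τ⁻¹ : C.Lˣ) : C.L)
            - algebraMap C.L C.SW (τ : C.L) * C.Tc a
            - algebraMap C.L C.SW (τ : C.L) * algebraMap C.L C.SW ((τ⁻¹ : C.Lˣ) : C.L) := by
          noncomm_ring
      _ = (algebraMap C.L C.SW t * C.Tc a + 1)
            + algebraMap C.L C.SW ((τ⁻¹ : C.Lˣ) : C.L) * C.Tc a
            - algebraMap C.L C.SW (τ : C.L) * C.Tc a - 1 := by
          rw [hsq, ← hcom, hττS]
      _ = 0 := by rw [htdef, map_sub]; noncomm_ring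
  exact ⟨main, fun j => main (C.asimple j) (C.αP_mem j)⟩
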